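/- For C > 0 and T real, the function u(t, xi) = sqrt(T - t) * G(xi / sqrt(T - t)), with G(z) = sqrt(C/(2*pi)) * exp(-z^2/(2C)) + (z/2) * erf(z/sqrt(2C)), satisfies the backward heat equation u_t + (C/2) u_{xi xi} = 0 for all t < T and xi in R, and u(t, xi) -> |xi|/2 as t -> T for each fixed xi. -/

import Mathlib

/-- The error function `erf x = (2/√π) ∫₀ˣ e^{-s²} ds`. -/
noncomputable def myErf (x : ℝ) : ℝ :=
  (2 / Real.sqrt Real.pi) * ∫ s in (0:ℝ)..x, Real.exp (-(s ^ 2))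

/-- `G(z) = √(C/(2π)) e^{-z²/(2C)} + (z/2) erf(z/√(2C))`. -/
noncomputable def Gfun (C z : ℝ) : ℝ :=
  Real.sqrt (C / (2 * Real.pi)) * Real.exp (-(z ^ 2) / (2 * C)) +
    (z / 2) * myErf (z / Real.sqrt (2 * C))

open Real Filter MeasureTheory Set
open scoped Topology

lemma erf_hasDerivAt (x : ℝ) :
    HasDerivAt myErf (2 / Real.sqrt Real.pi * Real.exp (-(x ^ 2))) x := by
  have hc : Continuous fun s : ℝ => Real.exp (-(s ^ 2)) := by continuity
  exact ((hc.integral_hasStrictDerivAt 0 x).hasDerivAt).const_mul (2 / Real.sqrt Real.pi)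

lemma erf_neg (x : ℝ) : myErf (-x) = - myErf x := by
  unfold myErf
  have h := intervalIntegral.integral_comp_neg (a := (0:ℝ)) (b := x)
    (fun s => Real.exp (-(s ^ 2)))
  simp only [neg_neg, neg_sq, neg_zero] at h
  rw [intervalIntegral.integral_symm (-x) 0, ← h]
  ring

lemma erf_tendsto_atTop : Tendsto myErf atTop (𝓝 1) := by
  have hi : IntegrableOn (fun s : ℝ => Real.exp (-(s ^ 2))) (Ioi 0) := by
    have := (integrable_exp_neg_mul_sq (b := (1:ℝ)) one_pos).integrableOn (s := Ioi 0)
    simpa using this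
  have h := intervalIntegral_tendsto_integral_Ioi 0 hi tendsto_id
  have hval : (∫ s in Ioi (0:ℝ), Real.exp (-(s ^ 2))) = Real.sqrt Real.pi / 2 := by
    have := integral_gaussian_Ioi 1
    simpa using this
  rw [hval] at h
  have h2 := h.const_mul (2 / Real.sqrt Real.pi)
  have hπ : Real.sqrt Real.pi ≠ 0 := ne_of_gt (Real.sqrt_pos.2 Real.pi_pos)
  have he : 2 / Real.sqrt Real.pi * (Real.sqrt Real.pi / 2) = 1 := by field_simp
  rw [he] at h2
  exact h2

lemma sqrt_key (C : ℝ) (hC : 0 < C) :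
    Real.sqrt (C / (2 * Real.pi)) = C / (Real.sqrt Real.pi * Real.sqrt (2 * C)) := by
  rw [eq_div_iff (by positivity)]
  rw [← Real.sqrt_mul Real.pi_pos.le, ← Real.sqrt_mul (by positivity)]
  rw [show C / (2 * Real.pi) * (Real.pi * (2 * C)) = C ^ 2 by field_simp]
  exact Real.sqrt_sq hC.le

lemma sq_arg (C z : ℝ) (hC : 0 < C) : (z / Real.sqrt (2 * C)) ^ 2 = z ^ 2 / (2 * C) := by
  rw [div_pow, Real.sq_sqrt (by positivity)]

lemma Gfun_hasDerivAt (C : ℝ) (hC : 0 < C) (z : ℝ) :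
    HasDerivAt (Gfun C) ((1 / 2) * myErf (z / Real.sqrt (2 * C))) z := by
  have h1 : HasDerivAt (fun z : ℝ => -(z ^ 2) / (2 * C)) (-(2 * z) / (2 * C)) z := by
    have := ((hasDerivAt_pow 2 z).neg).div_const (2 * C)
    simpa [mul_comm] using this
  have hE : HasDerivAt (fun z : ℝ => Real.exp (-(z ^ 2) / (2 * C)))
      (Real.exp (-(z ^ 2) / (2 * C)) * (-(2 * z) / (2 * C))) z := h1.exp
  have h2 : HasDerivAt (fun z : ℝ => z / Real.sqrt (2 * C)) (1 / Real.sqrt (2 * C)) z := by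
    simpa using (hasDerivAt_id z).div_const (Real.sqrt (2 * C))
  have h3 : HasDerivAt (fun z : ℝ => myErf (z / Real.sqrt (2 * C)))
      ((2 / Real.sqrt Real.pi * Real.exp (-((z / Real.sqrt (2 * C)) ^ 2)))
        * (1 / Real.sqrt (2 * C))) z :=
    (erf_hasDerivAt _).comp z h2
  have h4 : HasDerivAt (fun z : ℝ => z / 2) (1 / 2) z := by
    simpa using (hasDerivAt_id z).div_const 2
  have h5 := (hE.const_mul (Real.sqrt (C / (2 * Real.pi)))).add (h4.mul h3)
  have hπ : (0:ℝ) < Real.sqrt Real.pi := Real.sqrt_pos.2 Real.pi_pos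
  have h2C : (0:ℝ) < Real.sqrt (2 * C) := Real.sqrt_pos.2 (by positivity)
  have heq : Real.sqrt (C / (2 * Real.pi)) * (Real.exp (-(z ^ 2) / (2 * C)) * (-(2 * z) / (2 * C)))
      + (1 / 2 * myErf (z / Real.sqrt (2 * C)) +
        z / 2 * (2 / Real.sqrt Real.pi * Real.exp (-((z / Real.sqrt (2 * C)) ^ 2))
          * (1 / Real.sqrt (2 * C))))
      = (1 / 2) * myErf (z / Real.sqrt (2 * C)) := by
    rw [sq_arg C z hC, neg_div, sqrt_key C hC]
    field_simp
    ring
  rw [heq] at h5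
  exact h5.congr_of_eventuallyEq (by filter_upwards with y; simp [Gfun])

theorem selfSimilar_backward_heat (C T : ℝ) (hC : 0 < C) :
    (∀ t < T, ∀ ξ : ℝ,
      deriv (fun s => Real.sqrt (T - s) * Gfun C (ξ / Real.sqrt (T - s))) t
        + (C / 2) *
          deriv (deriv (fun x => Real.sqrt (T - t) * Gfun C (x / Real.sqrt (T - t)))) ξ
        = 0) ∧
    (∀ ξ : ℝ,
      Filter.Tendsto (fun t => Real.sqrt (T - t) * Gfun C (ξ / Real.sqrt (T - t)))
        (nhdsWithin T (Set.Iio T)) (nhds (|ξ| / 2))) := by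
  have hπ : (0:ℝ) < Real.sqrt Real.pi := Real.sqrt_pos.2 Real.pi_pos
  have h2C : (0:ℝ) < Real.sqrt (2 * C) := Real.sqrt_pos.2 (by positivity)
  constructor
  · intro t ht ξ
    have hTt : (0:ℝ) < T - t := sub_pos.2 ht
    have hr : (0:ℝ) < Real.sqrt (T - t) := Real.sqrt_pos.2 hTt
    set r := Real.sqrt (T - t) with hrdef
    -- time derivative
    have h1 : HasDerivAt (fun s : ℝ => T - s) (-1) t := (hasDerivAt_id t).const_sub T
    have hsq : HasDerivAt (fun s : ℝ => Real.sqrt (T - s)) (1 / (2 * r) * (-1)) t :=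
      (Real.hasDerivAt_sqrt hTt.ne').comp t h1
    have hinv : HasDerivAt (fun s : ℝ => ξ / Real.sqrt (T - s))
        (ξ * (-(1 / (2 * r) * (-1)) / r ^ 2)) t := by
      have := (hsq.inv hr.ne').const_mul ξ
      simpa [div_eq_mul_inv] using this
    have hGt := (Gfun_hasDerivAt C hC (ξ / r)).comp t hinv
    have hu : HasDerivAt (fun s => Real.sqrt (T - s) * Gfun C (ξ / Real.sqrt (T - s)))
        (1 / (2 * r) * -1 * Gfun C (ξ / r) +
          r * (1 / 2 * myErf (ξ / r / Real.sqrt (2 * C)) * (ξ * (-(1 / (2 * r) * -1) / r ^ 2)))) t := by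
      simpa [Function.comp_def, ← hrdef] using hsq.fun_mul hGt
    -- space derivative
    have hxd : ∀ x : ℝ, HasDerivAt (fun x : ℝ => r * Gfun C (x / r))
        ((1 / 2) * myErf (x / r / Real.sqrt (2 * C))) x := by
      intro x
      have hx : HasDerivAt (fun x : ℝ => x / r) (1 / r) x := by
        simpa using (hasDerivAt_id x).div_const r
      have h := ((Gfun_hasDerivAt C hC (x / r)).comp x hx).const_mul r
      refine h.congr_deriv ?_
      rw [mul_comm r, mul_assoc, one_div_mul_cancel hr.ne', mul_one]
    have hD1 : deriv (fun x : ℝ => r * Gfun C (x / r))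
        = fun x => (1 / 2) * myErf (x / r / Real.sqrt (2 * C)) :=
      funext fun x => (hxd x).deriv
    have hx : HasDerivAt (fun x : ℝ => x / r / Real.sqrt (2 * C))
        (1 / r / Real.sqrt (2 * C)) ξ := by
      simpa using ((hasDerivAt_id ξ).div_const r).div_const (Real.sqrt (2 * C))
    have hx2 : HasDerivAt (fun x : ℝ => (1 / 2) * myErf (x / r / Real.sqrt (2 * C)))
        ((1 / 2) * ((2 / Real.sqrt Real.pi * Real.exp (-((ξ / r / Real.sqrt (2 * C)) ^ 2)))
          * (1 / r / Real.sqrt (2 * C)))) ξ :=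
      ((erf_hasDerivAt _).comp ξ hx).const_mul (1 / 2)
    rw [hu.deriv, hD1, hx2.deriv]
    -- algebra
    rw [show ξ / r / Real.sqrt (2 * C) = (ξ / r) / Real.sqrt (2 * C) from rfl,
      sq_arg C (ξ / r) hC]
    unfold Gfun
    rw [sqrt_key C hC, neg_div]
    field_simp
    ring
  · intro ξ
    have hA0 : Tendsto (fun t => Real.sqrt (T - t)) (𝓝[<] T) (𝓝 0) := by
      have hcont : ContinuousAt (fun t : ℝ => Real.sqrt (T - t)) T :=
        (Real.continuous_sqrt.comp (continuous_const.sub continuous_id)).continuousAt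
      have h := hcont.tendsto.mono_left (nhdsWithin_le_nhds (s := Set.Iio T))
      simpa using h
    have hsq0 : Tendsto (fun t => Real.sqrt (T - t)) (𝓝[<] T) (𝓝[>] (0:ℝ)) := by
      rw [tendsto_nhdsWithin_iff]
      refine ⟨hA0, ?_⟩
      filter_upwards [self_mem_nhdsWithin] with t ht
      exact Real.sqrt_pos.2 (sub_pos.2 ht)
    -- the Gaussian term tends to 0
    have hgauss : ∀ c : ℝ, Tendsto
        (fun t => Real.sqrt (T - t) * (Real.sqrt (C / (2 * Real.pi)) *
          Real.exp (-(c / Real.sqrt (T - t)) ^ 2 / (2 * C)))) (𝓝[<] T) (𝓝 0) := by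
      intro c
      apply squeeze_zero'
      · filter_upwards with t; positivity
      · filter_upwards with t
        have h1 : Real.exp (-(c / Real.sqrt (T - t)) ^ 2 / (2 * C)) ≤ 1 :=
          Real.exp_le_one_iff.2 (div_nonpos_iff.2 (Or.inr ⟨neg_nonpos.2 (sq_nonneg _), by positivity⟩))
        calc Real.sqrt (T - t) * (Real.sqrt (C / (2 * Real.pi)) *
              Real.exp (-(c / Real.sqrt (T - t)) ^ 2 / (2 * C)))
            ≤ Real.sqrt (T - t) * (Real.sqrt (C / (2 * Real.pi)) * 1) := by
              have := mul_le_mul_of_nonneg_left h1 (Real.sqrt_nonneg (C / (2 * Real.pi)))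
              exact mul_le_mul_of_nonneg_left this (Real.sqrt_nonneg _)
          _ = Real.sqrt (T - t) * Real.sqrt (C / (2 * Real.pi)) := by ring
      · simpa using hA0.mul_const (Real.sqrt (C / (2 * Real.pi)))
    have herfc : ∀ c : ℝ, 0 < c → Tendsto
        (fun t => myErf (c / Real.sqrt (T - t) / Real.sqrt (2 * C))) (𝓝[<] T) (𝓝 1) := by
      intro c hc
      have h1 : Tendsto (fun t => (Real.sqrt (T - t))⁻¹) (𝓝[<] T) atTop :=
        hsq0.inv_tendsto_nhdsGT_zero
      have h2 : Tendsto (fun t => c / Real.sqrt (T - t)) (𝓝[<] T) atTop := by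
        simpa [div_eq_mul_inv] using h1.const_mul_atTop hc
      exact erf_tendsto_atTop.comp (h2.atTop_div_const h2C)
    have hsplit : ∀ᶠ t in 𝓝[<] T, Real.sqrt (T - t) * Gfun C (ξ / Real.sqrt (T - t))
        = Real.sqrt (T - t) * (Real.sqrt (C / (2 * Real.pi)) *
            Real.exp (-(ξ / Real.sqrt (T - t)) ^ 2 / (2 * C)))
          + (ξ / 2) * myErf (ξ / Real.sqrt (T - t) / Real.sqrt (2 * C)) := by
      filter_upwards [self_mem_nhdsWithin] with t ht
      have hrt : (0:ℝ) < Real.sqrt (T - t) := Real.sqrt_pos.2 (sub_pos.2 ht)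
      unfold Gfun
      field_simp
    rcases lt_trichotomy ξ 0 with hξ | hξ | hξ
    · have hB : Tendsto (fun t => (ξ / 2) * myErf (ξ / Real.sqrt (T - t) / Real.sqrt (2 * C)))
          (𝓝[<] T) (𝓝 (-ξ / 2)) := by
        have h := (herfc (-ξ) (by linarith)).const_mul (-ξ / 2)
        rw [mul_one] at h
        refine Tendsto.congr' ?_ h
        filter_upwards with t
        have harg : ξ / Real.sqrt (T - t) / Real.sqrt (2 * C)
            = -(-ξ / Real.sqrt (T - t) / Real.sqrt (2 * C)) := by ring
        rw [harg, erf_neg]; ring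
      have hsum := (hgauss ξ).add hB
      rw [zero_add] at hsum
      rw [abs_of_neg hξ]
      exact Tendsto.congr' (hsplit.mono fun t h => h.symm) hsum
    · subst hξ
      have h := hA0.mul_const (Gfun C 0)
      rw [zero_mul] at h
      simpa [zero_div] using h
    · have hB : Tendsto (fun t => (ξ / 2) * myErf (ξ / Real.sqrt (T - t) / Real.sqrt (2 * C)))
          (𝓝[<] T) (𝓝 (ξ / 2)) := by
        have h := (herfc ξ hξ).const_mul (ξ / 2)
        rwa [mul_one] at h
      have hsum := (hgauss ξ).add hB
      rw [zero_add] at hsum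
      rw [abs_of_pos hξ]
      exact Tendsto.congr' (hsplit.mono fun t h => h.symm) hsum
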